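/- The functions p_{k,n}(t) = 2^{−N} Σ_{j=max{0,n+k−N}}^{min{n,k}} C(k,j) C(N−k,n−j) (1−e^{−2αt})^{n+k−2j} (1+e^{−2αt})^{N−(n+k−2j)} satisfy the forward Kolmogorov equations of the Ehrenfest birth-death process: d/dt p_{k,n}(t) = α(N−n+1) p_{k,n−1}(t) − αN p_{k,n}(t) + α(n+1) p_{k,n+1}(t) for 0 ≤ n ≤ N (with p_{k,−1} = p_{k,N+1} = 0), and p_{k,n}(0) = δ_{k,n}. -/

import Mathlib

/-- Transition probabilities of the Ehrenfest-type birth-death process with rates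
`λ_n = α(N−n)`, `μ_n = αn` and reflecting endpoints. -/
noncomputable def pEhrenfest (alpha : ℝ) (N k n : ℕ) (t : ℝ) : ℝ :=
  (1 / 2 ^ N) * ∑ j ∈ Finset.Icc (n + k - N) (min n k),
    (Nat.choose k j : ℝ) * (Nat.choose (N - k) (n - j) : ℝ) *
      (1 - Real.exp (-2 * alpha * t)) ^ (n + k - 2 * j) *
      (1 + Real.exp (-2 * alpha * t)) ^ (N - (n + k - 2 * j))

/-- The same transition probabilities, extended to `ℤ` by zero
(so that `p_{k,-1} = p_{k,N+1} = 0`). -/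
noncomputable def pEhrenfestZ (alpha : ℝ) (N k : ℕ) (n : ℤ) (t : ℝ) : ℝ :=
  if 0 ≤ n ∧ n ≤ (N : ℤ) then pEhrenfest alpha N k n.toNat t else 0

namespace EhrenfestAux

open Polynomial Finset

/-- apply `derivative` to each coefficient -/
noncomputable def Dc (P : Polynomial (Polynomial ℝ)) : Polynomial (Polynomial ℝ) :=
  P.sum fun i c => C (derivative c) * X ^ i

lemma Dc_coeff (P : Polynomial (Polynomial ℝ)) (n : ℕ) :
    (Dc P).coeff n = derivative (P.coeff n) := by
  classical
  unfold Dc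
  rw [Polynomial.sum, finset_sum_coeff]
  simp only [coeff_C_mul, coeff_X_pow, mul_ite, mul_one, mul_zero]
  rw [Finset.sum_ite_eq P.support n (fun i => derivative (P.coeff i))]
  by_cases h : n ∈ P.support
  · rw [if_pos h]
  · rw [if_neg h]
    rw [Polynomial.notMem_support_iff.mp h]
    simp

lemma Dc_add (P Q : Polynomial (Polynomial ℝ)) : Dc (P + Q) = Dc P + Dc Q := by
  ext n; simp [Dc_coeff, coeff_add]

lemma Dc_mul (P Q : Polynomial (Polynomial ℝ)) : Dc (P * Q) = Dc P * Q + P * Dc Q := by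
  refine Polynomial.ext fun n => ?_
  rw [Dc_coeff, coeff_add, coeff_mul P Q, derivative_sum, coeff_mul (Dc P) Q,
    coeff_mul P (Dc Q), ← Finset.sum_add_distrib]
  exact Finset.sum_congr rfl fun x _ => by rw [derivative_mul, Dc_coeff, Dc_coeff]

lemma Dc_C (c : Polynomial ℝ) : Dc (C c) = C (derivative c) := by
  ext n
  rw [Dc_coeff]
  simp only [coeff_C]
  split <;> simp

lemma Dc_one : Dc 1 = 0 := by
  rw [show (1 : Polynomial (Polynomial ℝ)) = C 1 from rfl, Dc_C]
  simp

lemma Dc_X : Dc (X : Polynomial (Polynomial ℝ)) = 0 := by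
  ext n
  rw [Dc_coeff]
  simp only [coeff_X]
  split <;> simp

lemma Dc_pow (P : Polynomial (Polynomial ℝ)) (m : ℕ) :
    Dc (P ^ m) = (m : Polynomial (Polynomial ℝ)) * P ^ (m - 1) * Dc P := by
  induction m with
  | zero => simp [Dc_one]
  | succ m ih =>
    rw [pow_succ, Dc_mul, ih]
    cases m with
    | zero => simp
    | succ m' => push_cast; ring

noncomputable def pa : Polynomial ℝ := 1 + X
noncomputable def pb : Polynomial ℝ := 1 - X
noncomputable def AA : Polynomial (Polynomial ℝ) := C pb + C pa * X
noncomputable def BB : Polynomial (Polynomial ℝ) := C pa + C pb * X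
noncomputable def FF (k l : ℕ) : Polynomial (Polynomial ℝ) := AA ^ k * BB ^ l
noncomputable def QQ (k l n : ℕ) : Polynomial ℝ := (FF k l).coeff n

lemma Dc_AA : Dc AA = X - 1 := by
  rw [AA, Dc_add, Dc_C, Dc_mul, Dc_C, Dc_X]
  simp [pa, pb]; ring

lemma Dc_BB : Dc BB = 1 - X := by
  rw [BB, Dc_add, Dc_C, Dc_mul, Dc_C, Dc_X]
  simp [pa, pb]; ring

lemma derivative_AA : derivative AA = C pa := by
  simp [AA]

lemma derivative_BB : derivative BB = C pb := by
  simp [BB]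

lemma Dc_FF (k l : ℕ) :
    Dc (FF k l) = (k : Polynomial (Polynomial ℝ)) * (AA ^ (k-1) * BB ^ l * (X - 1))
      + (l : Polynomial (Polynomial ℝ)) * (AA ^ k * BB ^ (l-1) * (1 - X)) := by
  rw [FF, Dc_mul, Dc_pow, Dc_pow, Dc_AA, Dc_BB]
  ring

lemma derivative_FF (k l : ℕ) :
    derivative (FF k l) = (k : Polynomial (Polynomial ℝ)) * (AA ^ (k-1) * BB ^ l * C pa)
      + (l : Polynomial (Polynomial ℝ)) * (AA ^ k * BB ^ (l-1) * C pb) := by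
  rw [FF, derivative_mul, derivative_pow, derivative_pow, derivative_AA, derivative_BB,
    map_natCast C, map_natCast C]
  ring

lemma main_id (k l : ℕ) :
    C (pb - pa) * Dc (FF k l) =
      X * (C ((k : Polynomial ℝ) + (l : Polynomial ℝ)) * FF k l) - X^2 * derivative (FF k l)
        - C ((k : Polynomial ℝ) + (l : Polynomial ℝ)) * FF k l + derivative (FF k l) := by
  rw [Dc_FF, derivative_FF, FF, map_sub, map_add, map_natCast C, map_natCast C]
  rcases k with _ | k <;> rcases l with _ | l <;>
    simp only [Nat.cast_zero, Nat.cast_succ, pow_zero, Nat.succ_sub_one, AA, BB] <;>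
    push_cast <;>
    ring

lemma key (k l n : ℕ) (u : ℝ) :
    (derivative (QQ k l n)).eval u * (-2*u) =
      ((k:ℝ) + (l:ℝ) - (n:ℝ) + 1) * (if n = 0 then 0 else (QQ k l (n-1)).eval u)
        - ((k:ℝ) + (l:ℝ)) * (QQ k l n).eval u + ((n:ℝ)+1) * (QQ k l (n+1)).eval u := by
  have H := congrArg (fun P : Polynomial (Polynomial ℝ) => (P.coeff n).eval u) (main_id k l)
  simp only [coeff_C_mul, Dc_coeff, coeff_add, coeff_sub] at H
  simp only [QQ]
  rcases n with _ | m
  · simp only [mul_coeff_zero, coeff_X_zero, zero_mul, coeff_derivative] at H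
    norm_num [coeff_X_pow] at H
    simp only [if_pos rfl]
    simp only [eval_mul, eval_sub, eval_add, eval_one, eval_X, eval_natCast, pa, pb,
      Nat.cast_zero, zero_mul, zero_sub, sub_zero, zero_add, eval_zero] at H ⊢
    push_cast at H ⊢
    linear_combination H
  · rw [coeff_X_mul, coeff_C_mul, show (X^2 : Polynomial (Polynomial ℝ)) = X * X from sq X,
      mul_assoc, coeff_X_mul, coeff_derivative] at H
    simp only [if_neg (Nat.succ_ne_zero m), Nat.succ_sub_one]
    rcases m with _ | m'
    · simp only [mul_coeff_zero, coeff_X_zero, zero_mul, coeff_derivative] at H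
      simp only [eval_mul, eval_sub, eval_add, eval_one, eval_X, eval_natCast, pa, pb,
        eval_zero] at H ⊢
      push_cast at H ⊢
      linear_combination H
    · rw [coeff_X_mul, coeff_derivative] at H
      simp only [eval_mul, eval_sub, eval_add, eval_one, eval_X, eval_natCast, pa, pb,
        eval_zero] at H ⊢
      push_cast at H ⊢
      linear_combination H

lemma coeff_binom (a b : ℝ) (K j : ℕ) :
    ((C b + C a * X : Polynomial ℝ) ^ K).coeff j = (K.choose j : ℝ) * a ^ j * b ^ (K - j) := by
  rw [add_comm, add_pow, finset_sum_coeff]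
  have hform : ∀ i : ℕ, (C a * X) ^ i * (C b) ^ (K - i) * ((K.choose i : ℕ) : Polynomial ℝ)
      = C ((K.choose i : ℝ) * a ^ i * b ^ (K - i)) * X ^ i := by
    intro i
    rw [mul_pow, ← C_pow, ← C_pow, ← C_eq_natCast]
    simp only [C_mul]
    ring
  rw [Finset.sum_eq_single j]
  · rw [hform, coeff_C_mul, coeff_X_pow, if_pos rfl, mul_one]
  · intro i _ hij
    rw [hform, coeff_C_mul, coeff_X_pow, if_neg (by omega), mul_zero]
  · intro hj
    rw [hform, coeff_C_mul, coeff_X_pow, if_pos rfl, mul_one,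
      Nat.choose_eq_zero_of_lt (by simp at hj; omega)]
    simp

lemma coeff_prod (a b : ℝ) (k l n : ℕ) :
    ((C b + C a * X : Polynomial ℝ) ^ k * (C a + C b * X) ^ l).coeff n
      = ∑ j ∈ range (n+1), (k.choose j : ℝ) * (l.choose (n-j) : ℝ)
          * (a ^ j * b ^ (k-j)) * (b ^ (n-j) * a ^ (l-(n-j))) := by
  rw [coeff_mul, Finset.Nat.sum_antidiagonal_eq_sum_range_succ_mk]
  refine Finset.sum_congr rfl fun j hj => ?_
  rw [coeff_binom a b k j, coeff_binom b a l (n - j)]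
  ring

lemma sum_Icc_eq (a b : ℝ) (N k n : ℕ) (hk : k ≤ N) :
    (∑ j ∈ Finset.Icc (n + k - N) (min n k),
        (k.choose j : ℝ) * ((N-k).choose (n-j) : ℝ) * b ^ (n + k - 2*j) * a ^ (N - (n + k - 2*j)))
    = ∑ j ∈ range (n+1), (k.choose j : ℝ) * ((N-k).choose (n-j) : ℝ)
        * (a ^ j * b ^ (k-j)) * (b ^ (n-j) * a ^ ((N-k)-(n-j))) := by
  have hsub : Finset.Icc (n + k - N) (min n k) ⊆ range (n+1) := by
    intro j hj
    simp only [Finset.mem_Icc, Finset.mem_range] at *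
    omega
  rw [← Finset.sum_subset hsub ?_]
  · refine Finset.sum_congr rfl fun j hj => ?_
    simp only [Finset.mem_Icc, le_min_iff] at hj
    have h1 := hj.1
    have h2 := hj.2.1
    have h3 := hj.2.2
    have e1 : (k - j) + (n - j) = n + k - 2*j := by omega
    have e2 : j + ((N - k) - (n - j)) = N - (n + k - 2*j) := by omega
    rw [← e2, ← e1, pow_add, pow_add]
    ring
  · intro j hjr hnot
    simp only [Finset.mem_range] at hjr
    simp only [Finset.mem_Icc, le_min_iff, not_and_or, not_le] at hnot
    rcases hnot with h | h
    · have : (N - k) < (n - j) := by omega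
      rw [Nat.choose_eq_zero_of_lt this]
      simp
    · rcases h with h | h
      · omega
      · rw [Nat.choose_eq_zero_of_lt h]
        simp

lemma QQ_eval (k l n : ℕ) (u : ℝ) :
    (QQ k l n).eval u
      = ((C (1-u) + C (1+u) * X : Polynomial ℝ) ^ k * (C (1+u) + C (1-u) * X) ^ l).coeff n := by
  rw [QQ, ← coe_evalRingHom, ← coeff_map]
  congr 1
  simp only [FF, AA, BB, pa, pb, Polynomial.map_mul, Polynomial.map_pow, Polynomial.map_add,
    map_C, Polynomial.map_X, coe_evalRingHom, eval_sub, eval_add, eval_one, eval_X]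

lemma QQ_eq_zero (k l n : ℕ) (hn : k + l < n) : QQ k l n = 0 := by
  have hA : AA.natDegree ≤ 1 := by
    refine le_trans (natDegree_add_le _ _) ?_
    simp only [natDegree_C, ge_iff_le, zero_le, sup_of_le_right]
    exact le_trans natDegree_mul_le (by simp)
  have hB : BB.natDegree ≤ 1 := by
    refine le_trans (natDegree_add_le _ _) ?_
    simp only [natDegree_C, ge_iff_le, zero_le, sup_of_le_right]
    exact le_trans natDegree_mul_le (by simp)
  refine coeff_eq_zero_of_natDegree_lt (lt_of_le_of_lt ?_ hn)
  refine le_trans natDegree_mul_le ?_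
  calc (AA^k).natDegree + (BB^l).natDegree ≤ k * AA.natDegree + l * BB.natDegree :=
        Nat.add_le_add natDegree_pow_le natDegree_pow_le
    _ ≤ k * 1 + l * 1 := Nat.add_le_add (Nat.mul_le_mul_left _ hA) (Nat.mul_le_mul_left _ hB)
    _ = k + l := by omega

lemma pE_eq (alpha : ℝ) (N k : ℕ) (hk : k ≤ N) (n : ℕ) (t : ℝ) :
    pEhrenfest alpha N k n t
      = (1/2^N : ℝ) * (QQ k (N-k) n).eval (Real.exp (-2*alpha*t)) := by
  rw [pEhrenfest, QQ_eval, coeff_prod,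
    ← sum_Icc_eq (1 + Real.exp (-2*alpha*t)) (1 - Real.exp (-2*alpha*t)) N k n hk]

lemma init (alpha : ℝ) (N k : ℕ) (hk : k ≤ N) (n : ℕ) (hn : n ≤ N) :
    pEhrenfest alpha N k n 0 = if k = n then 1 else 0 := by
  have hx : Real.exp (-2*alpha*0) = 1 := by
    rw [show -2*alpha*(0:ℝ) = 0 by ring, Real.exp_zero]
  rw [pEhrenfest, hx]
  by_cases hkn : k = n
  · subst hkn
    rw [if_pos rfl, Finset.sum_eq_single k]
    · rw [show k + k - 2*k = 0 from by omega]
      simp only [Nat.choose_self, Nat.sub_self, Nat.choose_zero_right, Nat.cast_one, pow_zero,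
        Nat.sub_zero, one_mul, mul_one]
      norm_num
    · intro j hj hjk
      simp only [Finset.mem_Icc, min_self] at hj
      have hm : k + k - 2*j ≠ 0 := by omega
      rw [show (1:ℝ) - 1 = 0 by norm_num, zero_pow hm]
      ring
    · intro h
      exfalso
      apply h
      simp only [Finset.mem_Icc, min_self]
      omega
  · rw [if_neg hkn, Finset.sum_eq_zero, mul_zero]
    intro j hj
    simp only [Finset.mem_Icc, le_min_iff] at hj
    have hm : n + k - 2*j ≠ 0 := by omega
    rw [show (1:ℝ) - 1 = 0 by norm_num, zero_pow hm]
    ring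

end EhrenfestAux

theorem pEhrenfest_solves_forward_equations
    (alpha : ℝ) (halpha : 0 < alpha) (N : ℕ) (hN : 1 ≤ N) (k : ℕ) (hk : k ≤ N) :
    (∀ n : ℤ, 0 ≤ n → n ≤ (N : ℤ) → ∀ t : ℝ,
      HasDerivAt (fun u => pEhrenfestZ alpha N k n u)
        (alpha * ((N : ℝ) - (n : ℝ) + 1) * pEhrenfestZ alpha N k (n - 1) t
          - alpha * (N : ℝ) * pEhrenfestZ alpha N k n t
          + alpha * ((n : ℝ) + 1) * pEhrenfestZ alpha N k (n + 1) t) t) ∧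
    (∀ n : ℕ, n ≤ N → pEhrenfest alpha N k n 0 = if k = n then 1 else 0) := by
  open EhrenfestAux Polynomial in
  constructor
  · intro n h0 h1 t
    lift n to ℕ using h0 with m
    have hmN : m ≤ N := by exact_mod_cast h1
    set x : ℝ := Real.exp (-2*alpha*t) with hxdef
    have hZn : pEhrenfestZ alpha N k (↑m) t = (1/2^N : ℝ) * (QQ k (N-k) m).eval x := by
      rw [pEhrenfestZ, if_pos ⟨Int.natCast_nonneg m, by exact_mod_cast hmN⟩,
        Int.toNat_natCast, pE_eq alpha N k hk m t]
    have hZm1 : pEhrenfestZ alpha N k ((m:ℤ) - 1) t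
        = if m = 0 then 0 else (1/2^N : ℝ) * (QQ k (N-k) (m-1)).eval x := by
      rcases m with _ | m'
      · norm_num [pEhrenfestZ]
      · rw [if_neg (Nat.succ_ne_zero m'), show ((m'+1 : ℕ):ℤ) - 1 = ((m' : ℕ):ℤ) by push_cast; ring,
          pEhrenfestZ, if_pos ⟨Int.natCast_nonneg m', by exact_mod_cast (by omega : m' ≤ N)⟩,
          Int.toNat_natCast, Nat.succ_sub_one, pE_eq alpha N k hk m' t]
    have hZp1 : pEhrenfestZ alpha N k ((m:ℤ) + 1) t
        = (1/2^N : ℝ) * (QQ k (N-k) (m+1)).eval x := by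
      by_cases hmN' : m + 1 ≤ N
      · rw [show ((m:ℤ)+1) = ((m+1 : ℕ):ℤ) by push_cast; ring, pEhrenfestZ,
          if_pos ⟨Int.natCast_nonneg _, by exact_mod_cast hmN'⟩,
          Int.toNat_natCast, pE_eq alpha N k hk (m+1) t]
      · rw [pEhrenfestZ, if_neg (by push_cast; omega),
          QQ_eq_zero k (N-k) (m+1) (by omega)]
        simp
    have hfun : (fun u => pEhrenfestZ alpha N k (↑m) u)
        = fun u => (1/2^N : ℝ) * (QQ k (N-k) m).eval (Real.exp (-2*alpha*u)) := by
      funext u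
      rw [pEhrenfestZ, if_pos ⟨Int.natCast_nonneg m, by exact_mod_cast hmN⟩,
        Int.toNat_natCast, pE_eq alpha N k hk m u]
    rw [hfun, hZn, hZm1, hZp1]
    have hx' : HasDerivAt (fun u : ℝ => Real.exp (-2*alpha*u)) (x * (-2*alpha)) t := by
      simpa [hxdef, mul_comm] using (((hasDerivAt_id t).const_mul (-2*alpha)).exp)
    have hP : HasDerivAt (fun u : ℝ => (QQ k (N-k) m).eval (Real.exp (-2*alpha*u)))
        ((derivative (QQ k (N-k) m)).eval x * (x * (-2*alpha))) t := by
      exact (HasDerivAt.comp t ((QQ k (N-k) m).hasDerivAt x) hx')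
    have hfinal := hP.const_mul (1/2^N : ℝ)
    refine hfinal.congr_deriv ?_
    symm
    have hkey := key k (N-k) m x
    rw [show (((N-k : ℕ)):ℝ) = (N:ℝ) - (k:ℝ) from by
      rw [Nat.cast_sub hk]] at hkey
    push_cast
    by_cases hm0 : m = 0
    · subst hm0
      simp only [if_pos rfl] at hkey ⊢
      push_cast at hkey ⊢
      linear_combination (-(alpha : ℝ)/2^N) * hkey
    · simp only [if_neg hm0] at hkey ⊢
      push_cast at hkey ⊢
      linear_combination (-(alpha : ℝ)/2^N) * hkey
  · intro n hn
    exact EhrenfestAux.init alpha N k hk n hn
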